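/- Let K be a field of characteristic 2, A, B ∈ K, λ := B + A² + A + 1, and let x₁,x₂,x₃,x₄ ∈ K satisfy x₁+x₂+x₃+x₄ = 1, x₁³+x₂³+x₃³+x₄³ = A, x₁⁵+x₂⁵+x₃⁵+x₄⁵ = B. Assume x₁+x₂ ∉ {0,1}, and set u = (x₃+x₄)/(x₁+x₂) and η = x₁x₂/(x₃+x₄). Then η² + η = λu + λ/u + (A+1)/u + (A+1)²/u² + (A+1)². -/

import Mathlib

set_option maxHeartbeats 1000000 in
private theorem eta_equation_key (K : Type*) [Field K] [CharP K 2] (s p t q A B u η : K)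
    (hs : s ≠ 0) (ht : t ≠ 0)
    (hst : t = 1 - s)
    (hA : s^3 + s*p + t^3 + t*q = A)
    (hB : s^5 + s^3*p + s*p^2 + t^5 + t^3*q + t*q^2 = B)
    (hu : u = t / s) (hη : η = p / t) :
    η ^ 2 + η =
      (B + A ^ 2 + A + 1) * u + (B + A ^ 2 + A + 1) / u +
        (A + 1) / u + (A + 1) ^ 2 / u ^ 2 + (A + 1) ^ 2 := by
  have htwo : (2:K) = 0 := CharTwo.two_eq_zero
  subst hA hB hu hη hst
  field_simp
  linear_combination (-2 - 2*q - 1*q^2 + 11*s + 10*s*q + 4*s*q^2 - 1*s*p - 1*s*p*q - 34*s^2 - 25*s^2*q - 7*s^2*q^2 + 5*s^2*p + 3*s^2*p*q + 1*s^2*p^2 + 64*s^3 + 35*s^3*q + 6*s^3*q^2 - 12*s^3*p - 4*s^3*p*q - 1*s^3*p^2 - 80*s^4 - 28*s^4*q - 2*s^4*q^2 + 13*s^4*p + 2*s^4*p*q + 63*s^5 + 11*s^5*q - 8*s^5*p - 29*s^6 - 1*s^6*q + 1*s^6*p + 5*s^7) * htwo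

/-- with `λ = B + A² + A + 1`, `u = (x₃+x₄)/(x₁+x₂)` and
`η = x₁x₂/(x₃+x₄)`, a solution of the affine system of `C` with
`x₁+x₂ ∉ {0,1}` satisfies
`η² + η = λu + λ/u + (A+1)/u + (A+1)²/u² + (A+1)²`. -/
theorem eta_equation
    (K : Type*) [Field K] [CharP K 2] (A B : K)
    (x1 x2 x3 x4 : K)
    (h1 : x1 + x2 + x3 + x4 = 1)
    (h3 : x1 ^ 3 + x2 ^ 3 + x3 ^ 3 + x4 ^ 3 = A)
    (h5 : x1 ^ 5 + x2 ^ 5 + x3 ^ 5 + x4 ^ 5 = B)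
    (h0 : x1 + x2 ≠ 0) (hone : x1 + x2 ≠ 1)
    (u η : K)
    (hu : u = (x3 + x4) / (x1 + x2))
    (hη : η = x1 * x2 / (x3 + x4)) :
    η ^ 2 + η =
      (B + A ^ 2 + A + 1) * u + (B + A ^ 2 + A + 1) / u +
        (A + 1) / u + (A + 1) ^ 2 / u ^ 2 + (A + 1) ^ 2 := by
  have htwo : (2:K) = 0 := CharTwo.two_eq_zero
  have hst : x3 + x4 = 1 - (x1 + x2) := by linear_combination h1
  have ht : x3 + x4 ≠ 0 := by
    intro h; apply hone; linear_combination hst - h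
  exact eta_equation_key K (x1 + x2) (x1 * x2) (x3 + x4) (x3 * x4) A B u η h0 ht hst
    (by linear_combination h3 + (2*x1*x2*(x1+x2) + 2*x3*x4*(x3+x4)) * htwo)
    (by linear_combination h5 + (3*(x1+x2)^3*(x1*x2) - 2*(x1+x2)*(x1*x2)^2
        + 3*(x3+x4)^3*(x3*x4) - 2*(x3+x4)*(x3*x4)^2) * htwo)
    hu hη
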